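/- Let β > −d, p' > 1, ρ < 0, n ≥ 1, and set σ(x) = |x|^β · max(|x|, 1)^{p'ρ/n}, assuming β + p'ρ/n > −d. Then for every cube S in ℝ^d, ∫_S σ dx ≤ C · |S| · max(ℓ_S, |c_S|)^β · max(ℓ_S, |c_S|, 1)^{p'ρ/n}, with C depending only on d, β, p', ρ, n. -/

import Mathlib

open MeasureTheory

/-- The axis-parallel cube in `ℝ^d` with center `c` and side length `ℓ`. -/
noncomputable def cube (d : ℕ) (c : EuclideanSpace ℝ (Fin d)) (ℓ : ℝ) :
    Set (EuclideanSpace ℝ (Fin d)) := {x | ∀ i, |x i - c i| ≤ ℓ / 2}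

open Metric Set

variable {d : ℕ}

lemma cube_eq (c : EuclideanSpace ℝ (Fin d)) (ℓ : ℝ) :
    cube d c ℓ = (MeasurableEquiv.toLp 2 (Fin d → ℝ)).symm ⁻¹'
      (Set.univ.pi fun i => Set.Icc (c i - ℓ/2) (c i + ℓ/2)) := by
  ext x
  simp only [cube, mem_setOf_eq, mem_preimage, mem_pi, mem_univ, forall_true_left, mem_Icc]
  refine forall_congr' fun i => ?_
  have : (MeasurableEquiv.toLp 2 (Fin d → ℝ)).symm x i = x i := rfl
  rw [this, abs_le]
  constructor <;> intro h <;> constructor <;> linarith [h.1, h.2]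

lemma measurableSet_cube (c : EuclideanSpace ℝ (Fin d)) (ℓ : ℝ) :
    MeasurableSet (cube d c ℓ) := by
  rw [cube_eq]
  exact (MeasurableEquiv.toLp 2 (Fin d → ℝ)).symm.measurable
    (MeasurableSet.univ_pi fun i => measurableSet_Icc)

lemma volume_cube (c : EuclideanSpace ℝ (Fin d)) {ℓ : ℝ} (hℓ : 0 ≤ ℓ) :
    volume (cube d c ℓ) = ENNReal.ofReal ℓ ^ d := by
  rw [cube_eq]
  rw [(EuclideanSpace.volume_preserving_symm_measurableEquiv_toLp (Fin d)).measure_preimage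
    ((MeasurableSet.univ_pi fun i => measurableSet_Icc).nullMeasurableSet)]
  rw [volume_pi_pi]
  simp only [Real.volume_Icc]
  have : ∀ i : Fin d, ENNReal.ofReal (c i + ℓ/2 - (c i - ℓ/2)) = ENNReal.ofReal ℓ := by
    intro i; congr 1; ring
  rw [Finset.prod_congr rfl (fun i _ => this i), Finset.prod_const, Finset.card_univ,
    Fintype.card_fin]

lemma norm_sub_le_of_mem_cube (hd : 0 < d) {c x : EuclideanSpace ℝ (Fin d)} {ℓ : ℝ}
    (hx : x ∈ cube d c ℓ) : ‖x - c‖ ≤ Real.sqrt d * ℓ / 2 := by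
  have hℓ : 0 ≤ ℓ := by
    have := hx ⟨0, hd⟩
    have := abs_nonneg (x ⟨0, hd⟩ - c ⟨0, hd⟩)
    linarith
  have h1 : ‖x - c‖ = Real.sqrt (∑ i, ‖(x - c) i‖ ^ 2) := EuclideanSpace.norm_eq _
  have h2 : (∑ i, ‖(x - c) i‖ ^ 2) ≤ (d : ℝ) * (ℓ/2)^2 := by
    calc (∑ i, ‖(x - c) i‖ ^ 2) ≤ ∑ _i : Fin d, (ℓ/2)^2 := by
          apply Finset.sum_le_sum
          intro i _
          have hxi : (x - c) i = x i - c i := rfl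
          rw [hxi, Real.norm_eq_abs]
          exact pow_le_pow_left₀ (abs_nonneg _) (hx i) 2
      _ = (d : ℝ) * (ℓ/2)^2 := by rw [Finset.sum_const, Finset.card_univ, Fintype.card_fin,
            nsmul_eq_mul]
  calc ‖x - c‖ ≤ Real.sqrt ((d : ℝ) * (ℓ/2)^2) := by rw [h1]; exact Real.sqrt_le_sqrt h2
    _ = Real.sqrt d * (ℓ/2) := by
        rw [Real.sqrt_mul (Nat.cast_nonneg d), Real.sqrt_sq (by linarith)]
    _ = Real.sqrt d * ℓ / 2 := by ring



lemma meas_rpow_norm (γ : ℝ) :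
    Measurable (fun x : EuclideanSpace ℝ (Fin d) => ENNReal.ofReal (‖x‖ ^ γ)) := by
  fun_prop

lemma I_lt_top (hd : 0 < d) {γ : ℝ} (hγ : -(d : ℝ) < γ) (hγ0 : γ < 0) :
    (∫⁻ x in ball (0 : EuclideanSpace ℝ (Fin d)) 1, ENNReal.ofReal (‖x‖ ^ γ)) < ⊤ := by
  set E := EuclideanSpace ℝ (Fin d)
  set μ : Measure E := volume.restrict (ball (0 : E) 1) with hμ
  have hfin : Module.finrank ℝ E = d := finrank_euclideanSpace_fin
  have hnn : 0 ≤ᵐ[μ] fun x : E => ‖x‖ ^ γ :=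
    ae_of_all _ fun x => Real.rpow_nonneg (norm_nonneg x) γ
  have hmeas : AEMeasurable (fun x : E => ‖x‖ ^ γ) μ := by fun_prop
  rw [lintegral_eq_lintegral_meas_le μ hnn hmeas]
  have hsub : ∀ t : ℝ, 0 < t →
      {a : E | t ≤ ‖a‖ ^ γ} ⊆ closedBall (0 : E) (t ^ γ⁻¹) := by
    intro t ht a ha
    simp only [mem_setOf_eq] at ha
    have ha0 : a ≠ 0 := by
      rintro rfl
      rw [norm_zero, Real.zero_rpow hγ0.ne] at ha
      linarith
    have hna : 0 < ‖a‖ := norm_pos_iff.2 ha0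
    rw [mem_closedBall_zero_iff]
    exact (Real.le_rpow_inv_iff_of_neg hna ht hγ0).2 ha
  have hb1 : ∀ t ∈ Ioo (0:ℝ) 1, μ {a : E | t ≤ ‖a‖ ^ γ} ≤ volume (ball (0 : E) 1) := by
    intro t _
    exact le_trans (measure_mono (subset_univ _)) (Measure.restrict_apply_univ _).le
  have hb2 : ∀ t ∈ Ici (1:ℝ), μ {a : E | t ≤ ‖a‖ ^ γ} ≤
      ENNReal.ofReal (t ^ (γ⁻¹ * d)) * volume (ball (0 : E) 1) := by
    intro t ht
    have ht0 : (0:ℝ) < t := lt_of_lt_of_le one_pos ht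
    calc μ {a : E | t ≤ ‖a‖ ^ γ}
        ≤ volume (closedBall (0 : E) (t ^ γ⁻¹)) :=
          le_trans (Measure.restrict_apply_le _ _) (measure_mono (hsub t ht0))
      _ = ENNReal.ofReal ((t ^ γ⁻¹) ^ Module.finrank ℝ E) * volume (ball (0:E) 1) :=
          Measure.addHaar_closedBall volume 0 (Real.rpow_nonneg ht0.le _)
      _ = ENNReal.ofReal (t ^ (γ⁻¹ * d)) * volume (ball (0:E) 1) := by
          rw [hfin, ← Real.rpow_natCast (t ^ γ⁻¹) d, ← Real.rpow_mul ht0.le]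
  have hsplit : Ioi (0:ℝ) ⊆ Ioo 0 1 ∪ Ici 1 := by
    intro t ht
    rcases lt_or_ge t 1 with h | h
    · exact Or.inl ⟨ht, h⟩
    · exact Or.inr h
  calc (∫⁻ t in Ioi (0:ℝ), μ {a : E | t ≤ ‖a‖ ^ γ})
      ≤ ∫⁻ t in Ioo (0:ℝ) 1 ∪ Ici 1, μ {a : E | t ≤ ‖a‖ ^ γ} := lintegral_mono_set hsplit
    _ ≤ (∫⁻ t in Ioo (0:ℝ) 1, μ {a : E | t ≤ ‖a‖ ^ γ}) +
        ∫⁻ t in Ici (1:ℝ), μ {a : E | t ≤ ‖a‖ ^ γ} := lintegral_union_le _ _ _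
    _ < ⊤ := by
        refine ENNReal.add_lt_top.2 ⟨?_, ?_⟩
        · calc (∫⁻ t in Ioo (0:ℝ) 1, μ {a : E | t ≤ ‖a‖ ^ γ})
              ≤ ∫⁻ _t in Ioo (0:ℝ) 1, volume (ball (0:E) 1) :=
                setLIntegral_mono' measurableSet_Ioo hb1
            _ = volume (ball (0:E) 1) * volume (Ioo (0:ℝ) 1) := setLIntegral_const _ _
            _ < ⊤ := ENNReal.mul_lt_top measure_ball_lt_top (by simp [Real.volume_Ioo])
        · have hlt : γ⁻¹ * d < -1 := by
            rw [mul_comm, ← div_eq_mul_inv, div_lt_iff_of_neg hγ0]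
            linarith
          calc (∫⁻ t in Ici (1:ℝ), μ {a : E | t ≤ ‖a‖ ^ γ})
              ≤ ∫⁻ t in Ici (1:ℝ), ENNReal.ofReal (t ^ (γ⁻¹ * d)) * volume (ball (0:E) 1) :=
                setLIntegral_mono' measurableSet_Ici hb2
            _ = (∫⁻ t in Ici (1:ℝ), ENNReal.ofReal (t ^ (γ⁻¹ * d))) * volume (ball (0:E) 1) := by
                rw [lintegral_mul_const' _ _ measure_ball_lt_top.ne]
            _ < ⊤ := by
                refine ENNReal.mul_lt_top ?_ measure_ball_lt_top
                have : (∫⁻ t in Ici (1:ℝ), ENNReal.ofReal (t ^ (γ⁻¹ * d))) =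
                    ∫⁻ t in Ioi (1:ℝ), ENNReal.ofReal (t ^ (γ⁻¹ * d)) := by
                  refine setLIntegral_congr ?_
                  exact Ioi_ae_eq_Ici.symm
                rw [this]
                exact (integrableOn_Ioi_rpow_of_lt hlt one_pos).setLIntegral_lt_top



lemma lint_ball (γ : ℝ) {R : ℝ} (hR : 0 < R) :
    (∫⁻ x in ball (0 : EuclideanSpace ℝ (Fin d)) R, ENNReal.ofReal (‖x‖ ^ γ)) =
      ENNReal.ofReal (R ^ d * R ^ γ) *
        ∫⁻ x in ball (0 : EuclideanSpace ℝ (Fin d)) 1, ENNReal.ofReal (‖x‖ ^ γ) := by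
  set E := EuclideanSpace ℝ (Fin d)
  have hfin : Module.finrank ℝ E = d := finrank_euclideanSpace_fin
  have hRd : (0:ℝ) < R ^ d := pow_pos hR d
  have hvol : (volume : Measure E) =
      ENNReal.ofReal (R ^ d) • Measure.map (fun x : E => R • x) volume := by
    rw [Measure.map_addHaar_smul volume hR.ne', hfin, smul_smul,
      abs_of_pos (inv_pos.2 hRd), ← ENNReal.ofReal_mul hRd.le, mul_inv_cancel₀ hRd.ne',
      ENNReal.ofReal_one, one_smul]
  have hpre : (fun x : E => R • x) ⁻¹' ball (0 : E) R = ball (0 : E) 1 := by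
    ext y
    simp only [mem_preimage, mem_ball_zero_iff, norm_smul, Real.norm_eq_abs,
      abs_of_pos hR]
    constructor
    · intro h; nlinarith [norm_nonneg y]
    · intro h; nlinarith [norm_nonneg y]
  have hsmul : Measurable (fun x : E => R • x) := measurable_id.const_smul R
  calc (∫⁻ x in ball (0 : E) R, ENNReal.ofReal (‖x‖ ^ γ) ∂volume)
      = ENNReal.ofReal (R ^ d) *
          ∫⁻ x in ball (0 : E) R, ENNReal.ofReal (‖x‖ ^ γ)
            ∂(Measure.map (fun x : E => R • x) volume) := by
        conv_lhs => rw [hvol]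
        rw [Measure.restrict_smul, lintegral_smul_measure, smul_eq_mul]
    _ = ENNReal.ofReal (R ^ d) *
          ∫⁻ x in ball (0 : E) 1, ENNReal.ofReal (‖R • x‖ ^ γ) ∂volume := by
        rw [setLIntegral_map measurableSet_ball (meas_rpow_norm γ) hsmul, hpre]
    _ = ENNReal.ofReal (R ^ d) * (ENNReal.ofReal (R ^ γ) *
          ∫⁻ x in ball (0 : E) 1, ENNReal.ofReal (‖x‖ ^ γ) ∂volume) := by
        congr 1
        rw [← lintegral_const_mul _ (meas_rpow_norm γ)]
        refine lintegral_congr fun x => ?_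
        rw [norm_smul, Real.norm_eq_abs, abs_of_pos hR,
          Real.mul_rpow hR.le (norm_nonneg x), ENNReal.ofReal_mul (Real.rpow_nonneg hR.le γ)]
    _ = ENNReal.ofReal (R ^ d * R ^ γ) *
          ∫⁻ x in ball (0 : E) 1, ENNReal.ofReal (‖x‖ ^ γ) ∂volume := by
        rw [ENNReal.ofReal_mul hRd.le, mul_assoc]
set_option maxHeartbeats 2000000 in
lemma lkey (hd : 0 < d) {γ : ℝ} (hγ : -(d : ℝ) < γ) :
    ∃ K : ℝ, 0 < K ∧ ∀ (c : EuclideanSpace ℝ (Fin d)) (ℓ : ℝ), 0 < ℓ →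
      (∫⁻ x in cube d c ℓ, ENNReal.ofReal (‖x‖ ^ γ)) ≤
        ENNReal.ofReal (K * ℓ ^ d * (max ℓ ‖c‖) ^ γ) := by
  set E := EuclideanSpace ℝ (Fin d)
  set s : ℝ := Real.sqrt d with hs_def
  have hs1 : 1 ≤ s := by
    rw [hs_def, show (1:ℝ) = Real.sqrt 1 by simp]
    exact Real.sqrt_le_sqrt (by exact_mod_cast hd)
  have hs0 : 0 < s := lt_of_lt_of_le one_pos hs1
  rcases le_or_gt 0 γ with hγ0 | hγ0
  · -- γ ≥ 0 : constant bound on the cube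
    refine ⟨(1 + s) ^ γ, Real.rpow_pos_of_pos (by linarith) γ, fun c ℓ hℓ => ?_⟩
    set M : ℝ := max ℓ ‖c‖ with hM_def
    have hℓM : ℓ ≤ M := le_max_left _ _
    have hcM : ‖c‖ ≤ M := le_max_right _ _
    have hM0 : 0 < M := lt_of_lt_of_le hℓ hℓM
    have hpt : ∀ x ∈ cube d c ℓ, ENNReal.ofReal (‖x‖ ^ γ) ≤
        ENNReal.ofReal ((1 + s) ^ γ * M ^ γ) := by
      intro x hx
      refine ENNReal.ofReal_le_ofReal ?_
      have h1 : ‖x‖ ≤ ‖c‖ + ‖x - c‖ := by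
        simpa using norm_add_le c (x - c)
      have h2 : ‖x - c‖ ≤ s * ℓ / 2 := by
        rw [hs_def]; exact norm_sub_le_of_mem_cube hd hx
      have h3 : ‖x‖ ≤ (1 + s) * M := by nlinarith
      calc ‖x‖ ^ γ ≤ ((1 + s) * M) ^ γ :=
            Real.rpow_le_rpow (norm_nonneg x) h3 hγ0
        _ = (1 + s) ^ γ * M ^ γ := Real.mul_rpow (by linarith) hM0.le
    calc (∫⁻ x in cube d c ℓ, ENNReal.ofReal (‖x‖ ^ γ))
        ≤ ∫⁻ _x in cube d c ℓ, ENNReal.ofReal ((1 + s) ^ γ * M ^ γ) :=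
          setLIntegral_mono' (measurableSet_cube c ℓ) hpt
      _ = ENNReal.ofReal ((1 + s) ^ γ * M ^ γ) * volume (cube d c ℓ) :=
          setLIntegral_const _ _
      _ = ENNReal.ofReal ((1 + s) ^ γ * M ^ γ) * ENNReal.ofReal ℓ ^ d :=
          by rw [volume_cube c hℓ.le]
      _ = ENNReal.ofReal ((1 + s) ^ γ * M ^ γ * ℓ ^ d) := by
          rw [← ENNReal.ofReal_pow hℓ.le, ← ENNReal.ofReal_mul
            (mul_nonneg (Real.rpow_nonneg (by linarith) γ) (Real.rpow_nonneg hM0.le γ))]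
      _ = ENNReal.ofReal ((1 + s) ^ γ * ℓ ^ d * M ^ γ) := by ring_nf
  · -- γ < 0
    have hInt := I_lt_top hd hγ hγ0
    set I : ENNReal := ∫⁻ x in ball (0 : E) 1, ENNReal.ofReal (‖x‖ ^ γ) with hI_def
    set Ibar : ℝ := I.toReal with hIbar_def
    have hIbar0 : 0 ≤ Ibar := ENNReal.toReal_nonneg
    have hIeq : I = ENNReal.ofReal Ibar := (ENNReal.ofReal_toReal hInt.ne).symm
    clear_value Ibar
    clear_value I
    set KA : ℝ := (2:ℝ) ^ (-γ) with hKA_def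
    set KB : ℝ := (2*s) ^ (d:ℕ) * ((2*s) ^ γ * (s ^ (-γ) * (Ibar + 1))) with hKB_def
    have hKA0 : 0 < KA := Real.rpow_pos_of_pos two_pos _
    have hKB0 : 0 < KB := by
      apply mul_pos (pow_pos (by linarith) d)
      apply mul_pos (Real.rpow_pos_of_pos (by linarith) γ)
      apply mul_pos (Real.rpow_pos_of_pos hs0 _)
      linarith
    refine ⟨KA + KB, by linarith, fun c ℓ hℓ => ?_⟩
    set M : ℝ := max ℓ ‖c‖ with hM_def
    have hℓM : ℓ ≤ M := le_max_left _ _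
    have hM0 : 0 < M := lt_of_lt_of_le hℓ hℓM
    have hMγ : 0 < M ^ γ := Real.rpow_pos_of_pos hM0 γ
    have hld : 0 < ℓ ^ d := pow_pos hℓ d
    rcases le_or_gt (s * ℓ) ‖c‖ with hcase | hcase
    · -- far case: constant lower bound for ‖x‖ on the cube
      have hc0 : 0 < ‖c‖ := lt_of_lt_of_le (mul_pos hs0 hℓ) hcase
      have hMc : M = ‖c‖ := max_eq_right (by nlinarith)
      have hpt : ∀ x ∈ cube d c ℓ, ENNReal.ofReal (‖x‖ ^ γ) ≤
          ENNReal.ofReal (KA * M ^ γ) := by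
        intro x hx
        refine ENNReal.ofReal_le_ofReal ?_
        have h2 : ‖x - c‖ ≤ s * ℓ / 2 := by
          rw [hs_def]; exact norm_sub_le_of_mem_cube hd hx
        have h1 : ‖c‖ - ‖x - c‖ ≤ ‖x‖ := by
          have := norm_sub_norm_le c x
          have hxc : ‖c - x‖ = ‖x - c‖ := norm_sub_rev c x
          linarith [norm_sub_norm_le c x, (norm_sub_rev c x).le]
        have h3 : ‖c‖ / 2 ≤ ‖x‖ := by linarith
        calc ‖x‖ ^ γ ≤ (‖c‖ / 2) ^ γ :=
              Real.rpow_le_rpow_of_nonpos (by linarith) h3 hγ0.le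
          _ = ‖c‖ ^ γ / 2 ^ γ := Real.div_rpow hc0.le (by norm_num : (0:ℝ) ≤ 2) γ
          _ = KA * M ^ γ := by
              rw [hKA_def, hMc, Real.rpow_neg (by norm_num : (0:ℝ) ≤ 2), div_eq_mul_inv,
                mul_comm]
      calc (∫⁻ x in cube d c ℓ, ENNReal.ofReal (‖x‖ ^ γ))
          ≤ ∫⁻ _x in cube d c ℓ, ENNReal.ofReal (KA * M ^ γ) :=
            setLIntegral_mono' (measurableSet_cube c ℓ) hpt
        _ = ENNReal.ofReal (KA * M ^ γ) * ENNReal.ofReal ℓ ^ d := by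
            rw [setLIntegral_const, volume_cube c hℓ.le]
        _ = ENNReal.ofReal (KA * M ^ γ * ℓ ^ d) := by
            rw [← ENNReal.ofReal_pow hℓ.le, ← ENNReal.ofReal_mul
              (mul_nonneg hKA0.le hMγ.le)]
        _ ≤ ENNReal.ofReal ((KA + KB) * ℓ ^ d * M ^ γ) := by
            refine ENNReal.ofReal_le_ofReal ?_
            nlinarith [mul_nonneg (mul_nonneg hKB0.le hld.le) hMγ.le]
    · -- near case: compare with a ball of radius 2sℓ
      set R : ℝ := 2 * s * ℓ with hR_def
      have hR0 : 0 < R := by positivity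
      have hsub : cube d c ℓ ⊆ ball (0 : E) R := by
        intro x hx
        rw [mem_ball_zero_iff]
        have h1 : ‖x‖ ≤ ‖c‖ + ‖x - c‖ := by
          simpa using norm_add_le c (x - c)
        have h2 : ‖x - c‖ ≤ s * ℓ / 2 := by
          rw [hs_def]; exact norm_sub_le_of_mem_cube hd hx
        have : s * ℓ > 0 := by positivity
        calc ‖x‖ ≤ ‖c‖ + s * ℓ / 2 := by linarith
          _ < R := by rw [hR_def]; nlinarith
      have hMsl : M ≤ s * ℓ := max_le (by nlinarith) hcase.le
      have hlγ : ℓ ^ γ ≤ s ^ (-γ) * M ^ γ := by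
        have h1 : (s * ℓ) ^ γ ≤ M ^ γ :=
          Real.rpow_le_rpow_of_nonpos hM0 hMsl hγ0.le
        have h2 : (s * ℓ) ^ γ = s ^ γ * ℓ ^ γ := Real.mul_rpow hs0.le hℓ.le
        have h3 : s ^ (-γ) * s ^ γ = 1 := by
          rw [← Real.rpow_add hs0]; simp
        calc ℓ ^ γ = s ^ (-γ) * (s ^ γ * ℓ ^ γ) := by
              rw [← mul_assoc, h3, one_mul]
          _ ≤ s ^ (-γ) * M ^ γ := by
              rw [← h2]
              exact mul_le_mul_of_nonneg_left h1 (Real.rpow_nonneg hs0.le _)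
      calc (∫⁻ x in cube d c ℓ, ENNReal.ofReal (‖x‖ ^ γ))
          ≤ ∫⁻ x in ball (0 : E) R, ENNReal.ofReal (‖x‖ ^ γ) := lintegral_mono_set hsub
        _ = ENNReal.ofReal (R ^ d * R ^ γ) * I := by rw [hI_def]; exact lint_ball γ hR0
        _ = ENNReal.ofReal (R ^ d * R ^ γ) * ENNReal.ofReal Ibar := by rw [← hIeq]
        _ = ENNReal.ofReal (R ^ d * R ^ γ * Ibar) := by
            rw [← ENNReal.ofReal_mul (by positivity)]
        _ ≤ ENNReal.ofReal ((KA + KB) * ℓ ^ d * M ^ γ) := by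
            refine ENNReal.ofReal_le_ofReal ?_
            have hRd : R ^ d = (2*s) ^ d * ℓ ^ d := by rw [hR_def, mul_pow]
            have hRγ : R ^ γ = (2*s) ^ γ * ℓ ^ γ := by
              rw [hR_def]; exact Real.mul_rpow (by positivity) hℓ.le
            have h2s : (0:ℝ) < (2*s) ^ γ := Real.rpow_pos_of_pos (by linarith) γ
            have h2sd : (0:ℝ) < (2*s) ^ d := pow_pos (by linarith) d
            have hsneg : (0:ℝ) < s ^ (-γ) := Real.rpow_pos_of_pos hs0 _
            have key : R ^ d * R ^ γ * Ibar ≤ KB * ℓ ^ d * M ^ γ := by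
              rw [hRd, hRγ, hKB_def]
              have step : ℓ ^ γ * Ibar ≤ s ^ (-γ) * M ^ γ * (Ibar + 1) := by
                have hlγ0 : 0 ≤ ℓ ^ γ := Real.rpow_nonneg hℓ.le γ
                nlinarith [mul_le_mul_of_nonneg_right hlγ hIbar0, mul_pos hsneg hMγ]
              calc (2*s) ^ d * ℓ ^ d * ((2*s) ^ γ * ℓ ^ γ) * Ibar
                  = ((2*s) ^ d * ℓ ^ d * (2*s) ^ γ) * (ℓ ^ γ * Ibar) := by ring
                _ ≤ ((2*s) ^ d * ℓ ^ d * (2*s) ^ γ) * (s ^ (-γ) * M ^ γ * (Ibar + 1)) := by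
                    refine mul_le_mul_of_nonneg_left step (by positivity)
                _ = (2*s) ^ d * ((2*s) ^ γ * (s ^ (-γ) * (Ibar + 1))) * ℓ ^ d * M ^ γ := by
                    ring
            have hrest : KB * ℓ ^ d * M ^ γ ≤ (KA + KB) * ℓ ^ d * M ^ γ := by
              nlinarith [mul_nonneg (mul_nonneg hKA0.le hld.le) hMγ.le]
            linarith

set_option maxHeartbeats 2000000 in
/-- For `σ(x) = |x|^β max(|x|,1)^{p'ρ/n}` with `β > -d`, `p' > 1`, `ρ < 0` and
`β + p'ρ/n > -d`, one has `∫_S σ ≤ C |S| max(ℓ_S,|c_S|)^β max(ℓ_S,|c_S|,1)^{p'ρ/n}`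
for all cubes `S`, with `C` depending only on `d, β, p', ρ, n`. -/
theorem stmt12 (d n : ℕ) (hd : 0 < d) (hn : 1 ≤ n) (β p' ρ : ℝ)
    (hβ : -(d : ℝ) < β) (hp' : 1 < p') (hρ : ρ < 0)
    (hβρ : -(d : ℝ) < β + p' * ρ / n) :
    ∃ C : ℝ, 0 < C ∧
      ∀ (cS : EuclideanSpace ℝ (Fin d)) (ℓ : ℝ), 0 < ℓ →
        (∫ x in cube d cS ℓ, ‖x‖ ^ β * max ‖x‖ 1 ^ (p' * ρ / n)) ≤
          C * ℓ ^ (d : ℕ) * max ℓ ‖cS‖ ^ β * max (max ℓ ‖cS‖) 1 ^ (p' * ρ / n) := by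
  have hn0 : (0:ℝ) < n := by exact_mod_cast hn
  set γ' : ℝ := p' * ρ / n with hγ'_def
  have hγ'neg : γ' < 0 :=
    div_neg_of_neg_of_pos (mul_neg_of_pos_of_neg (by linarith) hρ) hn0
  obtain ⟨K₁, hK₁0, hK₁⟩ := lkey (γ := β + γ') hd hβρ
  obtain ⟨K₂, hK₂0, hK₂⟩ := lkey (γ := β) hd hβ
  refine ⟨K₁ + K₂, by linarith, fun c ℓ hℓ => ?_⟩
  set M : ℝ := max ℓ ‖c‖ with hM_def
  have hℓM : ℓ ≤ M := le_max_left _ _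
  have hM0 : 0 < M := lt_of_lt_of_le hℓ hℓM
  have hld : 0 < ℓ ^ d := pow_pos hℓ d
  have σmeas : AEStronglyMeasurable (fun x : EuclideanSpace ℝ (Fin d) => ‖x‖ ^ β * max ‖x‖ 1 ^ γ')
      (volume.restrict (cube d c ℓ)) := by
    apply Measurable.aestronglyMeasurable
    fun_prop
  have σnn : 0 ≤ᵐ[volume.restrict (cube d c ℓ)]
      fun x : EuclideanSpace ℝ (Fin d) => ‖x‖ ^ β * max ‖x‖ 1 ^ γ' :=
    ae_of_all _ fun x => mul_nonneg (Real.rpow_nonneg (norm_nonneg x) _)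
      (Real.rpow_nonneg (by positivity) _)
  rw [integral_eq_lintegral_of_nonneg_ae σnn σmeas]
  rcases le_or_gt 1 M with hM1 | hM1
  · -- M ≥ 1 : use the exponent β + γ'
    have hmax : max M 1 = M := max_eq_left hM1
    have h0 : ∀ᵐ x ∂(volume.restrict (cube d c ℓ)), x ≠ (0 : EuclideanSpace ℝ (Fin d)) := by
      refine ae_restrict_of_ae ?_
      have hnt : Nontrivial (EuclideanSpace ℝ (Fin d)) := by
        have : Module.finrank ℝ (EuclideanSpace ℝ (Fin d)) = d := finrank_euclideanSpace_fin
        exact Module.nontrivial_of_finrank_pos (R := ℝ) (by omega)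
      rw [ae_iff]
      have : {x : EuclideanSpace ℝ (Fin d) | ¬ x ≠ 0} = {(0 : EuclideanSpace ℝ (Fin d))} := by ext x; simp
      rw [this]
      exact measure_singleton 0
    have hae : ∀ᵐ x ∂(volume.restrict (cube d c ℓ)),
        ENNReal.ofReal (‖x‖ ^ β * max ‖x‖ 1 ^ γ') ≤
          ENNReal.ofReal (‖x‖ ^ (β + γ')) := by
      filter_upwards [h0] with x hx
      apply ENNReal.ofReal_le_ofReal
      have hx0 : 0 < ‖x‖ := norm_pos_iff.2 hx
      have h1 : max ‖x‖ 1 ^ γ' ≤ ‖x‖ ^ γ' :=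
        Real.rpow_le_rpow_of_nonpos hx0 (le_max_left _ _) hγ'neg.le
      calc ‖x‖ ^ β * max ‖x‖ 1 ^ γ' ≤ ‖x‖ ^ β * ‖x‖ ^ γ' :=
            mul_le_mul_of_nonneg_left h1 (Real.rpow_nonneg (norm_nonneg x) β)
        _ = ‖x‖ ^ (β + γ') := (Real.rpow_add hx0 β γ').symm
    have hle : (∫⁻ x in cube d c ℓ, ENNReal.ofReal (‖x‖ ^ β * max ‖x‖ 1 ^ γ')) ≤
        ENNReal.ofReal (K₁ * ℓ ^ d * M ^ (β + γ')) :=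
      le_trans (lintegral_mono_ae hae) (hK₁ c ℓ hℓ)
    calc (∫⁻ x in cube d c ℓ, ENNReal.ofReal (‖x‖ ^ β * max ‖x‖ 1 ^ γ')).toReal
        ≤ (ENNReal.ofReal (K₁ * ℓ ^ d * M ^ (β + γ'))).toReal :=
          ENNReal.toReal_mono ENNReal.ofReal_ne_top hle
      _ = K₁ * ℓ ^ d * M ^ (β + γ') := ENNReal.toReal_ofReal
          (by positivity)
      _ ≤ (K₁ + K₂) * ℓ ^ d * M ^ β * max M 1 ^ γ' := by
          rw [hmax, Real.rpow_add hM0]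
          have hMβ : 0 < M ^ β := Real.rpow_pos_of_pos hM0 β
          have hMγ' : 0 < M ^ γ' := Real.rpow_pos_of_pos hM0 γ'
          nlinarith [mul_pos (mul_pos hld hMβ) hMγ', mul_pos hK₂0 (mul_pos (mul_pos hld hMβ) hMγ')]
  · -- M < 1 : use the exponent β
    have hmax : max M 1 = 1 := max_eq_right hM1.le
    have hae : ∀ᵐ x ∂(volume.restrict (cube d c ℓ)),
        ENNReal.ofReal (‖x‖ ^ β * max ‖x‖ 1 ^ γ') ≤
          ENNReal.ofReal (‖x‖ ^ β) := by
      refine ae_of_all _ fun x => ?_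
      apply ENNReal.ofReal_le_ofReal
      have h1 : max ‖x‖ 1 ^ γ' ≤ 1 :=
        Real.rpow_le_one_of_one_le_of_nonpos (le_max_right _ _) hγ'neg.le
      calc ‖x‖ ^ β * max ‖x‖ 1 ^ γ' ≤ ‖x‖ ^ β * 1 :=
            mul_le_mul_of_nonneg_left h1 (Real.rpow_nonneg (norm_nonneg x) β)
        _ = ‖x‖ ^ β := mul_one _
    have hle : (∫⁻ x in cube d c ℓ, ENNReal.ofReal (‖x‖ ^ β * max ‖x‖ 1 ^ γ')) ≤
        ENNReal.ofReal (K₂ * ℓ ^ d * M ^ β) :=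
      le_trans (lintegral_mono_ae hae) (hK₂ c ℓ hℓ)
    calc (∫⁻ x in cube d c ℓ, ENNReal.ofReal (‖x‖ ^ β * max ‖x‖ 1 ^ γ')).toReal
        ≤ (ENNReal.ofReal (K₂ * ℓ ^ d * M ^ β)).toReal :=
          ENNReal.toReal_mono ENNReal.ofReal_ne_top hle
      _ = K₂ * ℓ ^ d * M ^ β := ENNReal.toReal_ofReal (by positivity)
      _ ≤ (K₁ + K₂) * ℓ ^ d * M ^ β * max M 1 ^ γ' := by
          rw [hmax, Real.one_rpow, mul_one]
          have hMβ : 0 < M ^ β := Real.rpow_pos_of_pos hM0 β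
          nlinarith [mul_pos hld hMβ, mul_pos hK₁0 (mul_pos hld hMβ)]
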